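/- Let A be a finite type, let Q : A → ℝ satisfy Q(a) > 0 for all a and ∑_{a} Q(a) = 1, let a*, â ∈ A, let D be a natural number, and let x ∈ ℝ^D with x ≠ 0. For b ∈ A define Ũ(b) ∈ ℝ^{A × D} by Ũ(b)_{a,j} = x_j · ([a* = b]·[a = b]/Q(b) − [a = â]), and let ‖·‖_F denote the Frobenius norm. Then ∑_{b ∈ A} Q(b) · ‖Ũ(b)‖_F² = ‖x‖² · (1/Q(a*) + 1) if â ≠ a*, and ∑_{b ∈ A} Q(b) · ‖Ũ(b)‖_F² = ‖x‖² · (1/Q(a*) − 1) if â = a*. In particular, ∑_{b ∈ A} Q(b) · ‖Ũ(b)‖_F² ≤ ‖x‖² · (1 + 1/Q(a*)). -/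

import Mathlib

private lemma banditron_key {A : Type*} [Fintype A] [DecidableEq A]
    (Q : A → ℝ) (hQpos : ∀ a, 0 < Q a) (hQsum : ∑ a : A, Q a = 1)
    (astar ahat : A) (D : ℕ) (x : Fin D → ℝ) (hx : x ≠ 0) :
    ∑ b : A, Q b *
        (∑ a : A, ∑ j : Fin D,
          (x j * ((if astar = b then (1 : ℝ) else 0) * (if a = b then 1 else 0) / Q b
            - (if a = ahat then 1 else 0))) ^ 2) =
      (∑ j : Fin D, x j ^ 2) * (1 / Q astar + 1 - 2 * (if ahat = astar then 1 else 0)) := by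
  set X := ∑ j : Fin D, x j ^ 2 with hX
  have step1 : ∀ b : A, (∑ a : A, ∑ j : Fin D,
      (x j * ((if astar = b then (1 : ℝ) else 0) * (if a = b then 1 else 0) / Q b
        - (if a = ahat then 1 else 0))) ^ 2)
      = X * ∑ a : A, ((if astar = b then (1 : ℝ) else 0) * (if a = b then 1 else 0) / Q b
        - (if a = ahat then 1 else 0)) ^ 2 := by
    intro b
    rw [Finset.mul_sum]
    refine Finset.sum_congr rfl fun a _ => ?_
    rw [hX, Finset.sum_mul]
    exact Finset.sum_congr rfl fun j _ => by ring
  have step2 : ∀ b : A, (∑ a : A, ((if astar = b then (1 : ℝ) else 0) * (if a = b then 1 else 0) / Q b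
        - (if a = ahat then 1 else 0)) ^ 2)
      = (if astar = b then (1:ℝ) else 0) / Q b ^ 2
        - 2 * (if astar = b then (1:ℝ) else 0) * (if b = ahat then 1 else 0) / Q b + 1 := by
    intro b
    have hQb := (hQpos b).ne'
    by_cases h1 : astar = b
    · by_cases h2 : b = ahat
      · subst h1; subst h2
        have : ∀ a : A, ((if astar = astar then (1 : ℝ) else 0) * (if a = astar then 1 else 0) / Q astar
            - (if a = astar then 1 else 0)) ^ 2 = if a = astar then (1 / Q astar - 1)^2 else 0 := by
          intro a; by_cases h : a = astar <;> simp [h] <;> ring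
        rw [Finset.sum_congr rfl fun a _ => this a, Finset.sum_ite_eq' Finset.univ astar]
        simp
        field_simp
        ring
      · subst h1
        have hne : astar ≠ ahat := fun hc => h2 hc
        have : ∀ a : A, ((if astar = astar then (1 : ℝ) else 0) * (if a = astar then 1 else 0) / Q astar
            - (if a = ahat then 1 else 0)) ^ 2 =
            (if a = astar then (1 / Q astar)^2 else 0) + (if a = ahat then 1 else 0) := by
          intro a
          by_cases h : a = astar
          · subst h; simp [hne]
          · by_cases h' : a = ahat <;> simp [h, h', Ne.symm hne]
        rw [Finset.sum_congr rfl fun a _ => this a, Finset.sum_add_distrib,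
          Finset.sum_ite_eq' Finset.univ astar, Finset.sum_ite_eq' Finset.univ ahat]
        simp [h2]
    · have : ∀ a : A, ((if astar = b then (1 : ℝ) else 0) * (if a = b then 1 else 0) / Q b
          - (if a = ahat then 1 else 0)) ^ 2 = if a = ahat then 1 else 0 := by
        intro a; by_cases h : a = ahat <;> simp [h, h1]
      rw [Finset.sum_congr rfl fun a _ => this a, Finset.sum_ite_eq' Finset.univ ahat]
      simp [h1]
  calc ∑ b : A, Q b * (∑ a : A, ∑ j : Fin D,
          (x j * ((if astar = b then (1 : ℝ) else 0) * (if a = b then 1 else 0) / Q b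
            - (if a = ahat then 1 else 0))) ^ 2)
      = ∑ b : A, Q b * (X * ((if astar = b then (1:ℝ) else 0) / Q b ^ 2
        - 2 * (if astar = b then (1:ℝ) else 0) * (if b = ahat then 1 else 0) / Q b + 1)) := by
        refine Finset.sum_congr rfl fun b _ => ?_
        rw [step1 b, step2 b]
    _ = X * (1 / Q astar + 1 - 2 * (if ahat = astar then 1 else 0)) := by
        have expand : ∀ b : A, Q b * (X * ((if astar = b then (1:ℝ) else 0) / Q b ^ 2
            - 2 * (if astar = b then (1:ℝ) else 0) * (if b = ahat then 1 else 0) / Q b + 1))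
            = (if b = astar then X * (1 / Q astar - 2 * (if astar = ahat then 1 else 0)) else 0)
              + X * Q b := by
          intro b
          have hQb := (hQpos b).ne'
          by_cases h : astar = b
          · subst h
            by_cases h' : astar = ahat
            · subst h'
              simp only [if_pos rfl, eq_self_iff_true, ↓reduceIte]
              field_simp
            · simp only [if_pos rfl, if_neg h', eq_self_iff_true, ↓reduceIte]
              field_simp
          · simp [h, Ne.symm h]
            ring
        rw [Finset.sum_congr rfl fun b _ => expand b, Finset.sum_add_distrib,
          Finset.sum_ite_eq' Finset.univ astar, ← Finset.mul_sum, hQsum]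
        have : (if astar = ahat then (1:ℝ) else 0) = (if ahat = astar then 1 else 0) := by
          by_cases h : astar = ahat <;> simp [h, Ne.symm, eq_comm]
        simp [this]
        ring




/-- Exact second moment of the Banditron update matrix
`Ũ(b)_{a,j} = x_j·([a* = b]·[a = b]/Q(b) − [a = â])` under `b ∼ Q`
(Frobenius norm squared written out as the sum of squared entries, and
`‖x‖²` as `∑ j, x j ^ 2`):
it equals `‖x‖²·(1/Q(a*) + 1)` if `â ≠ a*`, and `‖x‖²·(1/Q(a*) − 1)` if
`â = a*`; in particular it is at most `‖x‖²·(1 + 1/Q(a*))`. -/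
theorem banditron_update_second_moment {A : Type*} [Fintype A] [DecidableEq A]
    (Q : A → ℝ) (hQpos : ∀ a, 0 < Q a) (hQsum : ∑ a : A, Q a = 1)
    (astar ahat : A) (D : ℕ) (x : Fin D → ℝ) (hx : x ≠ 0) :
    (ahat ≠ astar →
      ∑ b : A, Q b *
          (∑ a : A, ∑ j : Fin D,
            (x j * ((if astar = b then (1 : ℝ) else 0) * (if a = b then 1 else 0) / Q b
              - (if a = ahat then 1 else 0))) ^ 2) =
        (∑ j : Fin D, x j ^ 2) * (1 / Q astar + 1)) ∧
    (ahat = astar →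
      ∑ b : A, Q b *
          (∑ a : A, ∑ j : Fin D,
            (x j * ((if astar = b then (1 : ℝ) else 0) * (if a = b then 1 else 0) / Q b
              - (if a = ahat then 1 else 0))) ^ 2) =
        (∑ j : Fin D, x j ^ 2) * (1 / Q astar - 1)) ∧
    ∑ b : A, Q b *
        (∑ a : A, ∑ j : Fin D,
          (x j * ((if astar = b then (1 : ℝ) else 0) * (if a = b then 1 else 0) / Q b
            - (if a = ahat then 1 else 0))) ^ 2) ≤
      (∑ j : Fin D, x j ^ 2) * (1 + 1 / Q astar) := by
  have key := banditron_key Q hQpos hQsum astar ahat D x hx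
  have hX : (0:ℝ) ≤ ∑ j : Fin D, x j ^ 2 :=
    Finset.sum_nonneg fun j _ => sq_nonneg _
  refine ⟨fun h => ?_, fun h => ?_, ?_⟩
  · rw [key, if_neg h]; ring
  · rw [key, if_pos h]; ring
  · rw [key]
    have : (0:ℝ) ≤ (if ahat = astar then (1:ℝ) else 0) := by positivity
    nlinarith [hX, this]
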